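/- Let N be a prime and 1 < d < N. Then the number of orbits of the action of (ℤ/Nℤ)ˣ on the d-element subsets of ℤ/Nℤ equals α₁ + ∑_{c>1, c|d, c|N−1} α_c + ∑_{c>1, c|d−1, c|N−1} α_c, where the rational numbers α_c are defined by the backwards recursion given in the context. (By the one-to-one correspondence between such orbits and unitary-equivalence classes of DFT-FUNTFs, this is the exact number of inequivalent harmonic frames of N vectors for ℂ^d when N is prime.) -/

import Mathlib

open scoped BigOperators Pointwise
open Finset

/-- The orbit equivalence relation, on `d`-element subsets of `ℤ/Nℤ`, induced by the
multiplication action of `(ℤ/Nℤ)ˣ`: `u·S = {u·s : s ∈ S}`. -/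
def subsetOrbitRel (N d : ℕ) (S S' : {s : Finset (ZMod N) // s.card = d}) : Prop :=
  ∃ u : (ZMod N)ˣ, Finset.image (fun x => (u : ZMod N) * x) S.1 = S'.1

/-- The leading term `(N−1−c)(N−1−2c)⋯(N−1−(d/c−1)c) / (c^(d/c−1)·(d/c)!)` in the
backwards recursion defining `α_c`. -/
noncomputable def alphaLead (N d c : ℕ) : ℚ :=
  (∏ j ∈ Finset.Icc 1 (d / c - 1), ((N : ℚ) - 1 - (j : ℚ) * (c : ℚ))) /
    ((c : ℚ) ^ (d / c - 1) * (Nat.factorial (d / c) : ℚ))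

/-- The numbers `α_c` (for `c > 1` with `c ∣ N−1` and `c ∣ d`), defined by the
backwards recursion
`α_c = (N−1−c)⋯(N−1−(d/c−1)c)/(c^(d/c−1)(d/c)!) − (c/(N−1))·∑_b ((N−1)/b)·α_b`,
the sum being over `b` with `c < b < N`, `c ∣ b`, `b ∣ d` and `b ∣ N−1`.
(The numbers `α_c` for `c ∣ d−1` are obtained as `alphaRec N (d−1) c`.) -/
noncomputable def alphaRec (N d : ℕ) : ℕ → ℚ := fun c =>
  alphaLead N d c - ((c : ℚ) / ((N : ℚ) - 1)) *
    ∑ b ∈ ((Finset.Ioo c N).filter fun b => c ∣ b ∧ b ∣ d ∧ b ∣ (N - 1)).attach,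
      (((N : ℚ) - 1) / (b.1 : ℚ)) * alphaRec N d b.1
termination_by c => N - c
decreasing_by
  have hb := b.2
  simp only [Finset.mem_filter, Finset.mem_Ioo] at hb
  omega

/-- The number `α₁`, defined by
`α₁ = (1/(N−1))·C(N,d) − ∑_{c∣d, c>1, c∣N−1} α_c/c − ∑_{c∣d−1, c>1, c∣N−1} α_c/c`. -/
noncomputable def alphaOne (N d : ℕ) : ℚ :=
  (1 / ((N : ℚ) - 1)) * (Nat.choose N d : ℚ)
    - ∑ c ∈ (Finset.Ioo 1 N).filter (fun c => c ∣ d ∧ c ∣ (N - 1)),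
        alphaRec N d c / (c : ℚ)
    - ∑ c ∈ (Finset.Ioo 1 N).filter (fun c => c ∣ (d - 1) ∧ c ∣ (N - 1)),
        alphaRec N (d - 1) c / (c : ℚ)

lemma alphaRec_eq (N d c : ℕ) : alphaRec N d c = alphaLead N d c - ((c : ℚ) / ((N : ℚ) - 1)) *
    ∑ b ∈ ((Finset.Ioo c N).filter fun b => c ∣ b ∧ b ∣ d ∧ b ∣ (N - 1)),
      (((N : ℚ) - 1) / (b : ℚ)) * alphaRec N d b := by
  rw [alphaRec]
  congr 1
  rw [mul_comm, mul_comm ((c : ℚ) / ((N : ℚ) - 1))]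
  congr 1
  exact Finset.sum_attach _ (fun (b : ℕ) => ((N : ℚ) - 1) / (b : ℚ) * alphaRec N d b)

lemma alphaLead_eq (N e c : ℕ) (hN : 2 ≤ N) (hc : 0 < c) (hce : c ∣ e) (hcN : c ∣ N - 1)
    (he : 0 < e) (heN : e ≤ N - 1) :
    alphaLead N e c = (((N - 1) / c).choose (e / c) : ℚ) * c / ((N : ℚ) - 1) := by
  set m := (N - 1) / c with hm
  set k := e / c with hk
  have hmc : m * c = N - 1 := Nat.div_mul_cancel hcN
  have hkc : k * c = e := Nat.div_mul_cancel hce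
  have hk1 : 1 ≤ k := (Nat.one_le_div_iff hc).mpr (Nat.le_of_dvd he hce)
  have hkm : k ≤ m := Nat.div_le_div_right heN
  have hN1 : ((N - 1 : ℕ) : ℚ) = (N : ℚ) - 1 := by
    rw [Nat.cast_sub (by omega : 1 ≤ N), Nat.cast_one]
  have hnat : (N - 1) * ∏ j ∈ Icc 1 (k - 1), (N - 1 - j * c)
      = m.choose k * k.factorial * c ^ k := by
    have h1 : m.choose k * k.factorial = ∏ j ∈ range k, (m - j) := by
      rw [← Nat.descFactorial_eq_prod_range]
      rw [Nat.choose_eq_descFactorial_div_factorial,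
        Nat.div_mul_cancel (Nat.factorial_dvd_descFactorial m k)]
    have hpow : c ^ k = ∏ _j ∈ range k, c := by simp
    have h2 : ∀ j ∈ range k, (m - j) * c = N - 1 - j * c := by
      intro j hj
      have hj' : j < k := mem_range.mp hj
      have h := Nat.mul_le_mul_right c (show j ≤ m by omega)
      have h' : (m - j) * c = m * c - j * c := Nat.sub_mul m j c
      omega
    have h3 : ∏ j ∈ range k, (N - 1 - j * c)
        = (N - 1) * ∏ j ∈ Icc 1 (k - 1), (N - 1 - j * c) := by
      conv_lhs => rw [show k = (k - 1) + 1 by omega]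
      rw [Finset.prod_range_succ']
      have h0 : N - 1 - 0 * c = N - 1 := by simp
      rw [h0, mul_comm]
      congr 1
      rw [show Icc 1 (k - 1) = Ico 1 ((k - 1) + 1) by rw [Finset.Ico_add_one_right_eq_Icc],
        Finset.prod_Ico_eq_prod_range]
      simp only [Nat.add_sub_cancel]
      exact prod_congr rfl fun j _ => by rw [add_comm]
    rw [h1, hpow, ← prod_mul_distrib, prod_congr rfl h2, h3]
  have hcast : (∏ j ∈ Icc 1 (k - 1), ((N : ℚ) - 1 - (j : ℚ) * (c : ℚ)))
      = ((∏ j ∈ Icc 1 (k - 1), (N - 1 - j * c) : ℕ) : ℚ) := by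
    rw [Nat.cast_prod]
    refine prod_congr rfl fun j hj => ?_
    have hj' : j ≤ k - 1 := (mem_Icc.mp hj).2
    have h1 : j * c ≤ (k - 1) * c := Nat.mul_le_mul_right c hj'
    have h2 : (k - 1) * c ≤ m * c := Nat.mul_le_mul_right c (by omega)
    have h3 : j * c ≤ N - 1 := by omega
    rw [Nat.cast_sub h3, Nat.cast_mul, hN1]
  have hQ : ((N : ℚ) - 1) ≠ 0 := by
    have : (2 : ℚ) ≤ (N : ℚ) := by exact_mod_cast hN
    linarith
  have hcQ : (c : ℚ) ≠ 0 := Nat.cast_ne_zero.mpr (by omega)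
  have hfQ : (k.factorial : ℚ) ≠ 0 := Nat.cast_ne_zero.mpr k.factorial_ne_zero
  have hnatQ : ((N - 1 : ℕ) : ℚ) * ((∏ j ∈ Icc 1 (k - 1), (N - 1 - j * c) : ℕ) : ℚ)
      = (m.choose k : ℚ) * (k.factorial : ℚ) * (c : ℚ) ^ k := by exact_mod_cast hnat
  rw [hN1] at hnatQ
  have hck : (c : ℚ) ^ k = (c : ℚ) ^ (k - 1) * c := by
    conv_lhs => rw [show k = (k - 1) + 1 by omega]
    rw [pow_succ]
  rw [hck] at hnatQ
  rw [alphaLead, ← hk, hcast, div_eq_div_iff (mul_ne_zero (pow_ne_zero _ hcQ) hfQ) hQ]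
  linear_combination hnatQ

lemma key_sum (N e c : ℕ) (hN : 2 ≤ N) (hc1 : 1 < c) (hce : c ∣ e) (hcN : c ∣ N - 1)
    (he : 0 < e) (heN : e ≤ N - 1) :
    ∑ b ∈ (Ioo 1 N).filter (fun b => c ∣ b ∧ b ∣ e ∧ b ∣ (N - 1)),
        (((N : ℚ) - 1) / (b : ℚ)) * alphaRec N e b
      = (((N - 1) / c).choose (e / c) : ℚ) := by
  have hset : (Ioo 1 N).filter (fun b => c ∣ b ∧ b ∣ e ∧ b ∣ (N - 1))
      = insert c ((Ioo c N).filter (fun b => c ∣ b ∧ b ∣ e ∧ b ∣ (N - 1))) := by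
    ext b
    simp only [mem_insert, mem_filter, mem_Ioo]
    constructor
    · rintro ⟨⟨hb1, hbN⟩, hcb, hbe, hbN1⟩
      rcases eq_or_lt_of_le (Nat.le_of_dvd (by omega) hcb) with h | h
      · left; exact h.symm
      · right; exact ⟨⟨h, hbN⟩, hcb, hbe, hbN1⟩
    · rintro (h | ⟨⟨hcb', hbN⟩, hcb, hbe, hbN1⟩)
      · subst h
        have hcN' : b ≤ N - 1 := Nat.le_of_dvd (by omega) hcN
        exact ⟨⟨hc1, by omega⟩, dvd_refl b, hce, hcN⟩
      · exact ⟨⟨by omega, hbN⟩, hcb, hbe, hbN1⟩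
  have hnotmem : c ∉ (Ioo c N).filter (fun b => c ∣ b ∧ b ∣ e ∧ b ∣ (N - 1)) := by
    simp only [mem_filter, mem_Ioo]
    rintro ⟨⟨h, _⟩, _⟩
    omega
  rw [hset, sum_insert hnotmem, alphaRec_eq, alphaLead_eq N e c hN (by omega) hce hcN he heN]
  have hQ : ((N : ℚ) - 1) ≠ 0 := by
    have : (2 : ℚ) ≤ (N : ℚ) := by exact_mod_cast hN
    linarith
  have hcQ : (c : ℚ) ≠ 0 := Nat.cast_ne_zero.mpr (by omega)
  field_simp
  ring

lemma partIIe (N e : ℕ) (hN2 : 2 ≤ N) (he : 0 < e) (heN : e ≤ N - 1) :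
    ∑ c ∈ (N - 1).divisors, (Nat.totient c : ℚ) *
        (if c ∣ e then (((N - 1) / c).choose (e / c) : ℚ) else 0)
      = ((N - 1).choose e : ℚ)
        + ∑ b ∈ (Ioo 1 N).filter (fun b => b ∣ e ∧ b ∣ (N - 1)),
            (((N : ℚ) - 1) - ((N : ℚ) - 1) / (b : ℚ)) * alphaRec N e b := by
  have hN1 : N - 1 ≠ 0 := by omega
  have h1mem : (1 : ℕ) ∈ (N - 1).divisors := Nat.one_mem_divisors.mpr hN1
  rw [← Finset.add_sum_erase _ _ h1mem]
  have hf1 : (Nat.totient 1 : ℚ) *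
      (if (1 : ℕ) ∣ e then (((N - 1) / 1).choose (e / 1) : ℚ) else 0) = ((N - 1).choose e : ℚ) := by
    simp [Nat.totient_one]
  rw [hf1]
  congr 1
  -- now the erase-sum
  have hsplit : ∀ c ∈ (N - 1).divisors.erase 1,
      (Nat.totient c : ℚ) * (if c ∣ e then (((N - 1) / c).choose (e / c) : ℚ) else 0)
        = if c ∣ e then (Nat.totient c : ℚ) * (((N - 1) / c).choose (e / c) : ℚ) else 0 := by
    intro c _
    split_ifs <;> ring
  rw [sum_congr rfl hsplit, ← sum_filter]
  have hsets : ((N - 1).divisors.erase 1).filter (· ∣ e)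
      = (Ioo 1 N).filter (fun b => b ∣ e ∧ b ∣ (N - 1)) := by
    ext b
    simp only [mem_filter, mem_erase, Nat.mem_divisors, mem_Ioo]
    constructor
    · rintro ⟨⟨hb1, hbN1, _⟩, hbe⟩
      have hb0 : 1 ≤ b := Nat.one_le_iff_ne_zero.mpr (by rintro rfl; exact hN1 (Nat.eq_zero_of_zero_dvd hbN1))
      have : b ≤ N - 1 := Nat.le_of_dvd (by omega) hbN1
      exact ⟨⟨by omega, by omega⟩, hbe, hbN1⟩
    · rintro ⟨⟨hb1, hbN⟩, hbe, hbN1⟩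
      exact ⟨⟨by omega, hbN1, hN1⟩, hbe⟩
  rw [hsets]
  set filt := (Ioo 1 N).filter (fun b => b ∣ e ∧ b ∣ (N - 1)) with hfilt
  have hkey : ∀ c ∈ filt,
      (Nat.totient c : ℚ) * (((N - 1) / c).choose (e / c) : ℚ)
        = ∑ b ∈ filt.filter (c ∣ ·), (Nat.totient c : ℚ) * ((((N : ℚ) - 1) / (b : ℚ)) * alphaRec N e b) := by
    intro c hc
    simp only [hfilt, mem_filter, mem_Ioo] at hc
    obtain ⟨⟨hc1, hcN⟩, hce, hcN1⟩ := hc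
    rw [← mul_sum]
    congr 1
    rw [← key_sum N e c hN2 hc1 hce hcN1 he heN]
    congr 1
    ext b
    simp only [hfilt, mem_filter, mem_Ioo]
    tauto
  rw [sum_congr rfl hkey]
  rw [sum_comm' (s' := fun b => filt.filter (· ∣ b)) (t' := filt) (by intro c b; simp only [mem_filter]; tauto)]
  refine sum_congr rfl fun b hb => ?_
  simp only [hfilt, mem_filter, mem_Ioo] at hb
  obtain ⟨⟨hb1, hbN⟩, hbe, hbN1⟩ := hb
  have hdiv : filt.filter (· ∣ b) = b.divisors.erase 1 := by
    ext c
    simp only [hfilt, mem_filter, mem_erase, Nat.mem_divisors, mem_Ioo]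
    constructor
    · rintro ⟨⟨⟨hc1, _⟩, _, _⟩, hcb⟩
      exact ⟨by omega, hcb, by omega⟩
    · rintro ⟨hc1, hcb, hb0⟩
      have hcb' : c ≤ b := Nat.le_of_dvd (by omega) hcb
      have hc0 : 1 ≤ c := Nat.one_le_iff_ne_zero.mpr (by rintro rfl; exact hb0 (Nat.eq_zero_of_zero_dvd hcb))
      exact ⟨⟨⟨by omega, by omega⟩, hcb.trans hbe, hcb.trans hbN1⟩, hcb⟩
  rw [← sum_mul, hdiv]
  have hφ : (∑ c ∈ b.divisors.erase 1, (Nat.totient c : ℚ)) = (b : ℚ) - 1 := by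
    have h1b : (1 : ℕ) ∈ b.divisors := Nat.one_mem_divisors.mpr (by omega)
    have := Nat.sum_totient b
    rw [← Finset.add_sum_erase _ _ h1b] at this
    have hcast : ((Nat.totient 1 + ∑ c ∈ b.divisors.erase 1, Nat.totient c : ℕ) : ℚ) = (b : ℚ) := by
      exact_mod_cast congrArg (Nat.cast : ℕ → ℚ) this
    push_cast at hcast
    simp [Nat.totient_one] at hcast
    linarith
  rw [hφ]
  have hbQ : (b : ℚ) ≠ 0 := Nat.cast_ne_zero.mpr (by omega)
  field_simp


section Sat
variable {α β : Type*} [Fintype α] [DecidableEq α] [Fintype β] [DecidableEq β]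

lemma card_sat (f : α → β) (c e : ℕ) (hc : 0 < c)
    (hf : ∀ b : β, (univ.filter fun x => f x = b).card = c) :
    Nat.card {S : Finset α // (∀ x y, f x = f y → x ∈ S → y ∈ S) ∧ S.card = e}
      = if c ∣ e then (Fintype.card β).choose (e / c) else 0 := by
  have hpre : ∀ U : Finset β, (univ.filter fun x => f x ∈ U).card = c * U.card := by
    intro U
    have hU : (univ.filter fun x => f x ∈ U)
        = U.biUnion (fun b => univ.filter fun x => f x = b) := by
      ext x
      simp only [mem_filter, mem_univ, true_and, mem_biUnion]
      constructor
      · intro h; exact ⟨f x, h, rfl⟩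
      · rintro ⟨b, hb, h⟩
        rw [h]; exact hb
    rw [hU, card_biUnion]
    · rw [Finset.sum_congr rfl fun b _ => hf b, sum_const, smul_eq_mul, mul_comm]
    · intro b1 _ b2 _ hne
      simp only [disjoint_left, mem_filter]
      rintro x ⟨_, h⟩ ⟨_, h'⟩
      exact hne (h ▸ h')
  have hsatpre : ∀ S : Finset α, (∀ x y, f x = f y → x ∈ S → y ∈ S) →
      (univ.filter fun x => f x ∈ S.image f) = S := by
    intro S hS
    ext x
    simp only [mem_filter, mem_univ, true_and, mem_image]
    constructor
    · rintro ⟨y, hy, hxy⟩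
      exact hS y x hxy hy
    · intro hx; exact ⟨x, hx, rfl⟩
  have himgpre : ∀ U : Finset β, (univ.filter fun x => f x ∈ U).image f = U := by
    intro U
    ext b
    simp only [mem_image, mem_filter, mem_univ, true_and]
    constructor
    · rintro ⟨x, hx, rfl⟩; exact hx
    · intro hb
      have hne : (univ.filter fun x => f x = b).Nonempty := by
        rw [← card_pos, hf b]; exact hc
      obtain ⟨x, hx⟩ := hne
      simp only [mem_filter, mem_univ, true_and] at hx
      exact ⟨x, by rw [hx]; exact hb, hx⟩
  by_cases hdvd : c ∣ e
  · rw [if_pos hdvd, ← Fintype.card_finset_len, ← Nat.card_eq_fintype_card]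
    apply Nat.card_congr
    refine ⟨fun S => ⟨S.1.image f, ?_⟩,
      fun U => ⟨univ.filter fun x => f x ∈ U.1, ?_, ?_⟩, ?_, ?_⟩
    · -- card of image is e / c
      have h1 := hpre (S.1.image f)
      rw [hsatpre S.1 S.2.1, S.2.2] at h1
      exact (Nat.div_eq_of_eq_mul_right hc h1).symm
    · -- preimage is saturated
      intro x y hxy hx
      simp only [mem_filter, mem_univ, true_and] at hx ⊢
      rw [← hxy]; exact hx
    · rw [hpre U.1, U.2, Nat.mul_div_cancel' hdvd]
    · intro S
      exact Subtype.ext (hsatpre S.1 S.2.1)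
    · intro U
      exact Subtype.ext (himgpre U.1)
  · rw [if_neg hdvd]
    have : IsEmpty {S : Finset α // (∀ x y, f x = f y → x ∈ S → y ∈ S) ∧ S.card = e} := by
      refine ⟨fun S => hdvd ⟨(S.1.image f).card, ?_⟩⟩
      have h1 := hpre (S.1.image f)
      rw [hsatpre S.1 S.2.1, S.2.2] at h1
      exact h1
    exact Nat.card_of_isEmpty

lemma nat_card_split {γ : Type*} [Finite γ] (p q : γ → Prop) :
    Nat.card {x : γ // p x} = Nat.card {x : γ // p x ∧ q x} + Nat.card {x : γ // p x ∧ ¬ q x} := by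
  classical
  rw [← Nat.card_sum]
  apply Nat.card_congr
  refine ⟨fun x => if h : q x.1 then Sum.inl ⟨x.1, x.2, h⟩ else Sum.inr ⟨x.1, x.2, h⟩,
    Sum.elim (fun y => ⟨y.1, y.2.1⟩) (fun y => ⟨y.1, y.2.1⟩), ?_, ?_⟩
  · intro x
    by_cases h : q x.1 <;> simp [h]
  · rintro (y | y)
    · simp [y.2.2]
    · simp [y.2.2]

end Sat

section ZModCount

variable {N : ℕ}

lemma unit_mul_ne_zero (u : (ZMod N)ˣ) {x : ZMod N} (hx : x ≠ 0) : (u : ZMod N) * x ≠ 0 := by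
  intro h
  apply hx
  have h2 := congrArg (fun y => ((u⁻¹ : (ZMod N)ˣ) : ZMod N) * y) h
  simpa [← mul_assoc, Units.inv_mul] using h2

lemma count_fixed (N : ℕ) [NeZero N] [Fact (Nat.Prime N)] (u : (ZMod N)ˣ) (e : ℕ) :
    Nat.card {s : Finset (ZMod N) //
        (∀ x ∈ s, (u : ZMod N) * x ∈ s) ∧ s.card = e ∧ (0 : ZMod N) ∉ s}
      = if orderOf u ∣ e then ((N - 1) / orderOf u).choose (e / orderOf u) else 0 := by
  classical
  set H := Subgroup.zpowers u with hH
  set c := orderOf u with hc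
  haveI : DecidableEq ((ZMod N)ˣ ⧸ H) := Classical.decEq _
  haveI : Fintype ((ZMod N)ˣ ⧸ H) := Fintype.ofFinite _
  set f : {x : ZMod N // x ≠ 0} → (ZMod N)ˣ ⧸ H :=
    fun x => QuotientGroup.mk (Units.mk0 x.1 x.2) with hf
  -- the "sigma" map on nonzero elements
  have hσ : ∀ x : {x : ZMod N // x ≠ 0}, ((u : ZMod N) * x.1 ≠ 0) :=
    fun x => unit_mul_ne_zero u x.2
  -- Step 1: equivalence with saturated finsets of nonzero elements
  have e1 : {s : Finset (ZMod N) //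
        (∀ x ∈ s, (u : ZMod N) * x ∈ s) ∧ s.card = e ∧ (0 : ZMod N) ∉ s}
      ≃ {T : Finset {x : ZMod N // x ≠ 0} //
        (∀ x ∈ T, (⟨(u : ZMod N) * x.1, hσ x⟩ : {x : ZMod N // x ≠ 0}) ∈ T) ∧ T.card = e} := by
    refine ⟨fun s => ⟨s.1.subtype (· ≠ 0), ?_, ?_⟩,
      fun T => ⟨T.1.map (Function.Embedding.subtype _), ?_, ?_, ?_⟩, ?_, ?_⟩
    · intro x hx
      rw [Finset.mem_subtype] at hx ⊢
      exact s.2.1 x.1 hx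
    · rw [Finset.card_subtype, Finset.filter_true_of_mem, s.2.2.1]
      intro x hx
      rintro rfl
      exact s.2.2.2 hx
    · intro x hx
      rw [Finset.mem_map] at hx
      obtain ⟨a, ha, rfl⟩ := hx
      rw [Finset.mem_map]
      exact ⟨⟨(u : ZMod N) * a.1, hσ a⟩, T.2.1 a ha, rfl⟩
    · rw [Finset.card_map]; exact T.2.2
    · intro h0
      rw [Finset.mem_map] at h0
      obtain ⟨a, _, ha⟩ := h0
      exact a.2 ha
    · intro s
      apply Subtype.ext
      simp only [Finset.subtype_map]
      apply Finset.filter_true_of_mem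
      intro x hx
      rintro rfl
      exact s.2.2.2 hx
    · intro T
      apply Subtype.ext
      ext a
      simp only [Finset.mem_subtype, Finset.mem_map, Function.Embedding.coe_subtype]
      constructor
      · rintro ⟨b, hb, hba⟩
        exact (Subtype.ext hba : b = a) ▸ hb
      · intro ha
        exact ⟨a, ha, rfl⟩
  -- Step 2: closedness is the same as f-saturation
  have hsat : ∀ T : Finset {x : ZMod N // x ≠ 0},
      (∀ x y, f x = f y → x ∈ T → y ∈ T)
        ↔ (∀ x ∈ T, (⟨(u : ZMod N) * x.1, hσ x⟩ : {x : ZMod N // x ≠ 0}) ∈ T) := by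
    intro T
    constructor
    · intro hT x hx
      refine hT x _ ?_ hx
      show QuotientGroup.mk _ = QuotientGroup.mk _
      rw [QuotientGroup.eq]
      have hval : Units.mk0 ((u : ZMod N) * x.1) (hσ x) = u * Units.mk0 x.1 x.2 := by
        ext; rw [Units.val_mk0, Units.val_mul, Units.val_mk0]
      rw [hval]
      have : (Units.mk0 x.1 x.2)⁻¹ * (u * Units.mk0 x.1 x.2) = u := by
        rw [mul_comm u, ← mul_assoc, inv_mul_cancel, one_mul]
      rw [this]
      exact Subgroup.mem_zpowers u
    · intro hT
      have hiter : ∀ (n : ℕ) (x : {x : ZMod N // x ≠ 0}), x ∈ T →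
          ∀ y : {x : ZMod N // x ≠ 0}, y.1 = (u : ZMod N) ^ n * x.1 → y ∈ T := by
        intro n
        induction n with
        | zero =>
          intro x hx y hy
          have : y = x := Subtype.ext (by rw [hy, pow_zero, one_mul])
          rwa [this]
        | succ n ih =>
          intro x hx y hy
          have hz : (u : ZMod N) ^ n * x.1 ≠ 0 := by
            have : ((u ^ n : (ZMod N)ˣ) : ZMod N) = (u : ZMod N) ^ n := Units.val_pow_eq_pow_val u n
            rw [← this]
            exact unit_mul_ne_zero (u ^ n) x.2
          have hzT : (⟨(u : ZMod N) ^ n * x.1, hz⟩ : {x : ZMod N // x ≠ 0}) ∈ T :=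
            ih x hx _ rfl
          have := hT _ hzT
          have hy2 : y = (⟨(u : ZMod N) * ((u : ZMod N) ^ n * x.1),
              hσ ⟨(u : ZMod N) ^ n * x.1, hz⟩⟩ : {x : ZMod N // x ≠ 0}) := by
            apply Subtype.ext
            rw [hy, pow_succ]
            ring
          rwa [hy2]
      intro x y hxy hx
      rw [hf] at hxy
      have hmem : (Units.mk0 x.1 x.2)⁻¹ * Units.mk0 y.1 y.2 ∈ H := by
        rwa [← QuotientGroup.eq]
      rw [hH, Subgroup.mem_zpowers_iff] at hmem
      obtain ⟨k, hk⟩ := hmem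
      have hc0 : 0 < c := orderOf_pos u
      have hkmod : u ^ ((k % (c : ℤ)).toNat) = (Units.mk0 x.1 x.2)⁻¹ * Units.mk0 y.1 y.2 := by
        have hnn : 0 ≤ k % (c : ℤ) := Int.emod_nonneg k (by exact_mod_cast hc0.ne')
        have h1 : (u : (ZMod N)ˣ) ^ ((k % (c : ℤ)).toNat) = u ^ (k % (c : ℤ)) := by
          rw [← zpow_natCast, Int.toNat_of_nonneg hnn]
        rw [h1]
        have h2 : u ^ (k % (c : ℤ)) = u ^ k := by
          conv_rhs => rw [← Int.emod_add_mul_ediv k (c : ℤ)]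
          rw [zpow_add, zpow_mul]
          have : (u : (ZMod N)ˣ) ^ ((c : ℤ)) = 1 := by
            rw [zpow_natCast, hc, pow_orderOf_eq_one]
          rw [this, one_zpow, mul_one]
        rw [h2, hk]
      set n := (k % (c : ℤ)).toNat
      have hyval : y.1 = (u : ZMod N) ^ n * x.1 := by
        have := congrArg (fun v : (ZMod N)ˣ => ((Units.mk0 x.1 x.2) * v : (ZMod N)ˣ)) hkmod
        simp only [← mul_assoc, mul_inv_cancel, one_mul] at this
        have hval := congrArg (fun v : (ZMod N)ˣ => (v : ZMod N)) this
        simp only [Units.val_mul, Units.val_pow_eq_pow_val, Units.val_mk0] at hval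
        rw [← hval]
        ring
      exact hiter n x hx y hyval
  have e2 : {T : Finset {x : ZMod N // x ≠ 0} //
        (∀ x ∈ T, (⟨(u : ZMod N) * x.1, hσ x⟩ : {x : ZMod N // x ≠ 0}) ∈ T) ∧ T.card = e}
      ≃ {T : Finset {x : ZMod N // x ≠ 0} //
        (∀ x y, f x = f y → x ∈ T → y ∈ T) ∧ T.card = e} :=
    Equiv.subtypeEquivRight (fun T => by rw [and_congr_left_iff]; intro _; rw [hsat T])
  rw [Nat.card_congr (e1.trans e2)]
  -- Step 3: apply the saturation counting lemma
  have hfib : ∀ b : (ZMod N)ˣ ⧸ H, (univ.filter fun x : {x : ZMod N // x ≠ 0} => f x = b).card = c := by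
    intro b
    obtain ⟨g, rfl⟩ := QuotientGroup.mk_surjective b
    rw [← Fintype.card_subtype]
    have eq1 : {x : {x : ZMod N // x ≠ 0} // f x = QuotientGroup.mk g}
        ≃ {v : (ZMod N)ˣ // (QuotientGroup.mk v : (ZMod N)ˣ ⧸ H) = QuotientGroup.mk g} := by
      refine (Equiv.subtypeEquiv (Equiv.ofBijective (fun v : (ZMod N)ˣ => (⟨(v : ZMod N), v.ne_zero⟩ : {x : ZMod N // x ≠ 0})) ⟨?_, ?_⟩) ?_).symm
      · intro v w hvw
        exact Units.ext (congrArg Subtype.val hvw)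
      · intro x
        exact ⟨Units.mk0 x.1 x.2, rfl⟩
      · intro v
        have hmk : Units.mk0 ((v : (ZMod N)ˣ) : ZMod N) v.ne_zero = v := Units.ext rfl
        simp only [hf, Equiv.ofBijective_apply]
        exact Iff.of_eq (congrArg (fun w => (QuotientGroup.mk w : (ZMod N)ˣ ⧸ H) = QuotientGroup.mk g) hmk.symm)
    have eq2 : {v : (ZMod N)ˣ // (QuotientGroup.mk v : (ZMod N)ˣ ⧸ H) = QuotientGroup.mk g} ≃ H := by
      refine ⟨fun v => ⟨g⁻¹ * v.1, ?_⟩, fun h => ⟨g * h.1, ?_⟩, ?_, ?_⟩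
      · rw [← QuotientGroup.eq]
        exact v.2.symm
      · symm
        rw [QuotientGroup.eq]
        simpa using h.2
      · intro v
        apply Subtype.ext
        simp
      · intro h
        apply Subtype.ext
        simp
    rw [Fintype.card_congr (eq1.trans eq2), ← Nat.card_eq_fintype_card, hH, Nat.card_zpowers]
  rw [card_sat f c e (orderOf_pos u) hfib]
  -- Step 4: card of the quotient
  have hq : Fintype.card ((ZMod N)ˣ ⧸ H) = (N - 1) / c := by
    have h1 := Subgroup.card_eq_card_quotient_mul_card_subgroup H
    rw [Nat.card_zpowers] at h1
    have h2 : Nat.card (ZMod N)ˣ = N - 1 := by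
      rw [Nat.card_eq_fintype_card, ZMod.card_units]
    rw [h2] at h1
    rw [← Nat.card_eq_fintype_card]
    exact (Nat.div_eq_of_eq_mul_left (orderOf_pos u) h1).symm
  rw [hq]

end ZModCount


lemma count_fixed_all (N : ℕ) [NeZero N] [Fact (Nat.Prime N)] (d : ℕ) (hd : 1 ≤ d)
    (u : (ZMod N)ˣ) :
    Nat.card {s : Finset (ZMod N) // (∀ x ∈ s, (u : ZMod N) * x ∈ s) ∧ s.card = d}
      = (if orderOf u ∣ d then ((N - 1) / orderOf u).choose (d / orderOf u) else 0)
        + (if orderOf u ∣ (d - 1) then ((N - 1) / orderOf u).choose ((d - 1) / orderOf u) else 0) := by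
  classical
  rw [nat_card_split (fun s : Finset (ZMod N) => (∀ x ∈ s, (u : ZMod N) * x ∈ s) ∧ s.card = d)
    (fun s => (0 : ZMod N) ∉ s)]
  have hA : Nat.card {s : Finset (ZMod N) //
        ((∀ x ∈ s, (u : ZMod N) * x ∈ s) ∧ s.card = d) ∧ (0 : ZMod N) ∉ s}
      = if orderOf u ∣ d then ((N - 1) / orderOf u).choose (d / orderOf u) else 0 := by
    rw [← count_fixed N u d]
    apply Nat.card_congr
    exact Equiv.subtypeEquivRight (fun s => by tauto)
  have hB : Nat.card {s : Finset (ZMod N) //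
        ((∀ x ∈ s, (u : ZMod N) * x ∈ s) ∧ s.card = d) ∧ ¬ (0 : ZMod N) ∉ s}
      = if orderOf u ∣ (d - 1) then ((N - 1) / orderOf u).choose ((d - 1) / orderOf u) else 0 := by
    rw [← count_fixed N u (d - 1)]
    apply Nat.card_congr
    refine ⟨fun s => ⟨s.1.erase 0, ?_, ?_, Finset.notMem_erase _ _⟩,
      fun t => ⟨insert (0 : ZMod N) t.1, ⟨?_, ?_⟩, ?_⟩, ?_, ?_⟩
    · intro x hx
      rw [Finset.mem_erase] at hx ⊢
      exact ⟨unit_mul_ne_zero u hx.1, s.2.1.1 x hx.2⟩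
    · rw [Finset.card_erase_of_mem (not_not.mp s.2.2), s.2.1.2]
    · intro x hx
      rw [Finset.mem_insert] at hx
      rcases hx with rfl | hx
      · rw [mul_zero]
        exact Finset.mem_insert_self 0 _
      · exact Finset.mem_insert_of_mem (t.2.1 x hx)
    · rw [Finset.card_insert_of_notMem t.2.2.2, t.2.2.1]
      omega
    · exact not_not.mpr (Finset.mem_insert_self 0 _)
    · intro s
      exact Subtype.ext (Finset.insert_erase (not_not.mp s.2.2))
    · intro t
      exact Subtype.ext (Finset.erase_insert t.2.2.2)
  rw [hA, hB]

instance instSubMul (N d : ℕ) : MulAction (ZMod N)ˣ {s : Finset (ZMod N) // s.card = d} where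
  smul u s := ⟨(u : (ZMod N)ˣ) • s.1, by rw [Finset.card_smul_finset]; exact s.2⟩
  one_smul s := Subtype.ext (one_smul _ s.1)
  mul_smul a b s := Subtype.ext (mul_smul a b s.1)

lemma subMul_val (N d : ℕ) (u : (ZMod N)ˣ) (s : {s : Finset (ZMod N) // s.card = d}) :
    (u • s).1 = u • s.1 := rfl

lemma smul_finset_eq_iff_closed (N : ℕ) (u : (ZMod N)ˣ) (s : Finset (ZMod N)) :
    u • s = s ↔ ∀ x ∈ s, (u : ZMod N) * x ∈ s := by
  constructor
  · intro h x hx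
    have h2 : u • x ∈ u • s := Finset.smul_mem_smul_finset hx
    rw [h] at h2
    rwa [Units.smul_def] at h2
  · intro h
    apply Finset.eq_of_subset_of_card_le
    · intro y hy
      rw [Finset.mem_smul_finset] at hy
      obtain ⟨x, hx, rfl⟩ := hy
      rw [Units.smul_def]
      exact h x hx
    · rw [Finset.card_smul_finset]

lemma burnside_count (N d : ℕ) [NeZero N] [Fact (Nat.Prime N)] (hd1 : 1 < d) (hdN : d < N) :
    Nat.card (Quot (subsetOrbitRel N d)) * (N - 1)
      = ∑ c ∈ (N - 1).divisors, Nat.totient c *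
          ((if c ∣ d then ((N - 1) / c).choose (d / c) else 0)
            + (if c ∣ (d - 1) then ((N - 1) / c).choose ((d - 1) / c) else 0)) := by
  classical
  set X := {s : Finset (ZMod N) // s.card = d}
  -- identify the Quot with the orbit space
  have hrel : ∀ S S' : X, subsetOrbitRel N d S S' ↔ (MulAction.orbitRel (ZMod N)ˣ X).r S S' := by
    intro S S'
    rw [MulAction.orbitRel_apply, MulAction.mem_orbit_iff]
    constructor
    · rintro ⟨u, hu⟩
      refine ⟨u⁻¹, ?_⟩
      have h1 : u • S = S' := by
        apply Subtype.ext
        rw [subMul_val, Finset.smul_finset_def, ← hu]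
        congr 1
      rw [← h1, inv_smul_smul]
    · rintro ⟨u, hu⟩
      refine ⟨u⁻¹, ?_⟩
      have h2 : (u⁻¹ • S).1 = Finset.image (fun x => ((u⁻¹ : (ZMod N)ˣ) : ZMod N) * x) S.1 := by
        rw [subMul_val, Finset.smul_finset_def]
        congr 1
      rw [← h2, ← hu, inv_smul_smul]
  have equiv1 : Quot (subsetOrbitRel N d) ≃ Quotient (MulAction.orbitRel (ZMod N)ˣ X) :=
    Quot.congrRight hrel
  haveI : Fintype (Quotient (MulAction.orbitRel (ZMod N)ˣ X)) := Fintype.ofFinite _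
  haveI hfb : ∀ a : (ZMod N)ˣ, Fintype (MulAction.fixedBy X a) := fun a => Fintype.ofFinite _
  have hburn := MulAction.sum_card_fixedBy_eq_card_orbits_mul_card_group (ZMod N)ˣ X
  have hcardG : Fintype.card (ZMod N)ˣ = N - 1 := ZMod.card_units N
  -- identify each fixedBy cardinality
  have hfix : ∀ u : (ZMod N)ˣ, Fintype.card (MulAction.fixedBy X u)
      = (if orderOf u ∣ d then ((N - 1) / orderOf u).choose (d / orderOf u) else 0)
        + (if orderOf u ∣ (d - 1) then ((N - 1) / orderOf u).choose ((d - 1) / orderOf u) else 0) := by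
    intro u
    rw [← Nat.card_eq_fintype_card, ← count_fixed_all N d (by omega) u]
    apply Nat.card_congr
    refine ⟨fun S => ⟨S.1.1, ?_, S.1.2⟩, fun s =>
      ⟨⟨s.1, s.2.2⟩, ?_⟩, fun S => rfl, fun s => rfl⟩
    · have hfixS : u • S.1 = S.1 := S.2
      have hval : u • (S.1).1 = (S.1).1 := by
        rw [← subMul_val N d u S.1, hfixS]
      exact (smul_finset_eq_iff_closed N u S.1.1).mp hval
    · show u • (⟨s.1, s.2.2⟩ : X) = ⟨s.1, s.2.2⟩
      apply Subtype.ext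
      rw [subMul_val]
      exact (smul_finset_eq_iff_closed N u s.1).mpr s.2.1
  -- assemble
  have hmaps : ∀ u ∈ (univ : Finset (ZMod N)ˣ), orderOf u ∈ (N - 1).divisors := by
    intro u _
    rw [Nat.mem_divisors]
    constructor
    · have h := orderOf_dvd_card (x := u)
      rwa [hcardG] at h
    · have h2 := (Fact.out : N.Prime).two_le
      omega
  calc Nat.card (Quot (subsetOrbitRel N d)) * (N - 1)
      = Fintype.card (Quotient (MulAction.orbitRel (ZMod N)ˣ X)) * Fintype.card (ZMod N)ˣ := by
        rw [Nat.card_congr equiv1, Nat.card_eq_fintype_card, hcardG]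
    _ = ∑ u : (ZMod N)ˣ, Fintype.card (MulAction.fixedBy X u) := hburn.symm
    _ = ∑ u : (ZMod N)ˣ,
          ((if orderOf u ∣ d then ((N - 1) / orderOf u).choose (d / orderOf u) else 0)
            + (if orderOf u ∣ (d - 1) then ((N - 1) / orderOf u).choose ((d - 1) / orderOf u) else 0)) :=
        Finset.sum_congr rfl (fun u _ => hfix u)
    _ = ∑ c ∈ (N - 1).divisors, ∑ u ∈ univ.filter (fun u : (ZMod N)ˣ => orderOf u = c),
          ((if orderOf u ∣ d then ((N - 1) / orderOf u).choose (d / orderOf u) else 0)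
            + (if orderOf u ∣ (d - 1) then ((N - 1) / orderOf u).choose ((d - 1) / orderOf u) else 0)) :=
        (Finset.sum_fiberwise_of_maps_to hmaps _).symm
    _ = ∑ c ∈ (N - 1).divisors, Nat.totient c *
          ((if c ∣ d then ((N - 1) / c).choose (d / c) else 0)
            + (if c ∣ (d - 1) then ((N - 1) / c).choose ((d - 1) / c) else 0)) := by
        refine Finset.sum_congr rfl fun c hc => ?_
        have hstep : ∀ u ∈ univ.filter (fun u : (ZMod N)ˣ => orderOf u = c),
            ((if orderOf u ∣ d then ((N - 1) / orderOf u).choose (d / orderOf u) else 0)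
              + (if orderOf u ∣ (d - 1) then ((N - 1) / orderOf u).choose ((d - 1) / orderOf u) else 0))
            = ((if c ∣ d then ((N - 1) / c).choose (d / c) else 0)
              + (if c ∣ (d - 1) then ((N - 1) / c).choose ((d - 1) / c) else 0)) := by
          intro u hu
          rw [(mem_filter.mp hu).2]
        rw [Finset.sum_congr rfl hstep, sum_const, smul_eq_mul]
        congr 1
        have hcd : c ∣ Fintype.card (ZMod N)ˣ := by
          rw [hcardG]; exact (Nat.mem_divisors.mp hc).1
        exact IsCyclic.card_orderOf_eq_totient hcd

/-- Exact enumeration of the inequivalent harmonic frames of prime order: for `N`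
prime and `1 < d < N`, the number of orbits of the action of `(ℤ/Nℤ)ˣ` on the
`d`-element subsets of `ℤ/Nℤ` — which equals the number of inequivalent harmonic
frames of `N` vectors for `ℂ^d` — is `α₁ + ∑_{c>1, c∣d, c∣N−1} α_c +
∑_{c>1, c∣d−1, c∣N−1} α_c`. -/
theorem card_subset_orbits_eq_alpha_sum (N d : ℕ) [NeZero N] (hN : N.Prime)
    (hd1 : 1 < d) (hdN : d < N) :
    (Nat.card (Quot (subsetOrbitRel N d)) : ℚ) =
      alphaOne N d
        + ∑ c ∈ (Finset.Ioo 1 N).filter (fun c => c ∣ d ∧ c ∣ (N - 1)),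
            alphaRec N d c
        + ∑ c ∈ (Finset.Ioo 1 N).filter (fun c => c ∣ (d - 1) ∧ c ∣ (N - 1)),
            alphaRec N (d - 1) c := by
  classical
  haveI : Fact N.Prime := ⟨hN⟩
  have hN2 : 2 ≤ N := hN.two_le
  have hN1 : ((N - 1 : ℕ) : ℚ) = (N : ℚ) - 1 := by
    rw [Nat.cast_sub (by omega : 1 ≤ N), Nat.cast_one]
  have hQ : ((N : ℚ) - 1) ≠ 0 := by
    have : (2 : ℚ) ≤ (N : ℚ) := by exact_mod_cast hN2
    linarith
  have hB := burnside_count N d hd1 hdN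
  have hA := partIIe N d hN2 (by omega) (by omega)
  have hA' := partIIe N (d - 1) hN2 (by omega) (by omega)
  set Q := Nat.card (Quot (subsetOrbitRel N d)) with hQdef
  set S1 := ∑ c ∈ (Finset.Ioo 1 N).filter (fun c => c ∣ d ∧ c ∣ (N - 1)), alphaRec N d c with hS1
  set S2 := ∑ c ∈ (Finset.Ioo 1 N).filter (fun c => c ∣ (d - 1) ∧ c ∣ (N - 1)),
      alphaRec N (d - 1) c with hS2
  set F1 := ∑ c ∈ (Finset.Ioo 1 N).filter (fun c => c ∣ d ∧ c ∣ (N - 1)),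
      alphaRec N d c / (c : ℚ) with hF1
  set F2 := ∑ c ∈ (Finset.Ioo 1 N).filter (fun c => c ∣ (d - 1) ∧ c ∣ (N - 1)),
      alphaRec N (d - 1) c / (c : ℚ) with hF2
  refine mul_right_cancel₀ hQ ?_
  have hT1 : ∑ b ∈ (Finset.Ioo 1 N).filter (fun b => b ∣ d ∧ b ∣ (N - 1)),
        (((N : ℚ) - 1) - ((N : ℚ) - 1) / (b : ℚ)) * alphaRec N d b
      = S1 * ((N : ℚ) - 1) - F1 * ((N : ℚ) - 1) := by
    rw [hS1, hF1, sum_mul, sum_mul, ← Finset.sum_sub_distrib]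
    exact Finset.sum_congr rfl fun c _ => by ring
  have hT2 : ∑ b ∈ (Finset.Ioo 1 N).filter (fun b => b ∣ (d - 1) ∧ b ∣ (N - 1)),
        (((N : ℚ) - 1) - ((N : ℚ) - 1) / (b : ℚ)) * alphaRec N (d - 1) b
      = S2 * ((N : ℚ) - 1) - F2 * ((N : ℚ) - 1) := by
    rw [hS2, hF2, sum_mul, sum_mul, ← Finset.sum_sub_distrib]
    exact Finset.sum_congr rfl fun c _ => by ring
  have hPas : (N.choose d : ℚ) = ((N - 1).choose d : ℚ) + ((N - 1).choose (d - 1) : ℚ) := by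
    have h : N.choose d = (N - 1).choose (d - 1) + (N - 1).choose d := by
      obtain ⟨n, rfl⟩ : ∃ n, N = n + 1 := ⟨N - 1, by omega⟩
      obtain ⟨k, rfl⟩ : ∃ k, d = k + 1 := ⟨d - 1, by omega⟩
      simp only [Nat.add_sub_cancel]
      exact Nat.choose_succ_succ n k
    rw [h]
    push_cast
    ring
  calc (Q : ℚ) * ((N : ℚ) - 1)
      = ((Q * (N - 1) : ℕ) : ℚ) := by rw [Nat.cast_mul, hN1]
    _ = ∑ c ∈ (N - 1).divisors,
          ((Nat.totient c * ((if c ∣ d then ((N - 1) / c).choose (d / c) else 0)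
            + (if c ∣ (d - 1) then ((N - 1) / c).choose ((d - 1) / c) else 0)) : ℕ) : ℚ) := by
        rw [hB, Nat.cast_sum]
    _ = (∑ c ∈ (N - 1).divisors, (Nat.totient c : ℚ) *
            (if c ∣ d then (((N - 1) / c).choose (d / c) : ℚ) else 0))
        + ∑ c ∈ (N - 1).divisors, (Nat.totient c : ℚ) *
            (if c ∣ (d - 1) then (((N - 1) / c).choose ((d - 1) / c) : ℚ) else 0) := by
        rw [← Finset.sum_add_distrib]
        refine Finset.sum_congr rfl fun c _ => ?_
        push_cast [apply_ite (Nat.cast : ℕ → ℚ)]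
        ring
    _ = (((N - 1).choose d : ℚ)
          + ∑ b ∈ (Finset.Ioo 1 N).filter (fun b => b ∣ d ∧ b ∣ (N - 1)),
              (((N : ℚ) - 1) - ((N : ℚ) - 1) / (b : ℚ)) * alphaRec N d b)
        + (((N - 1).choose (d - 1) : ℚ)
          + ∑ b ∈ (Finset.Ioo 1 N).filter (fun b => b ∣ (d - 1) ∧ b ∣ (N - 1)),
              (((N : ℚ) - 1) - ((N : ℚ) - 1) / (b : ℚ)) * alphaRec N (d - 1) b) := by
        rw [hA, hA']
    _ = (alphaOne N d + S1 + S2) * ((N : ℚ) - 1) := by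
        rw [hT1, hT2, alphaOne, ← hF1, ← hF2]
        have hexp : ((1 / ((N : ℚ) - 1)) * (N.choose d : ℚ) - F1 - F2 + S1 + S2) * ((N : ℚ) - 1)
            = (N.choose d : ℚ) + (S1 * ((N : ℚ) - 1) - F1 * ((N : ℚ) - 1))
              + (S2 * ((N : ℚ) - 1) - F2 * ((N : ℚ) - 1)) := by
          field_simp
          ring
        rw [hexp, hPas]
        ring
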